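/- Let T be a nonexpansive linear operator on a real Hilbert space H. Then Fix T = Fix T*, where T* is the adjoint of T. -/

import Mathlib

open scoped RealInnerProductSpace
lemma aux_fix_adjoint {H : Type*} [NormedAddCommGroup H] [InnerProductSpace ℝ H]
    [CompleteSpace H] (T : H →L[ℝ] H) (hT : ∀ x : H, ‖T x‖ ≤ ‖x‖)
    {x : H} (hx : T x = x) : ContinuousLinearMap.adjoint T x = x := by
  have hTnorm : ‖T‖ ≤ 1 := T.opNorm_le_bound zero_le_one (by simpa using hT)
  have hadj : ‖ContinuousLinearMap.adjoint T x‖ ≤ ‖x‖ := by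
    calc ‖ContinuousLinearMap.adjoint T x‖ ≤ ‖ContinuousLinearMap.adjoint T‖ * ‖x‖ :=
      (ContinuousLinearMap.adjoint T).le_opNorm x
    _ ≤ 1 * ‖x‖ := by
        apply mul_le_mul_of_nonneg_right _ (norm_nonneg x)
        rw [show ‖ContinuousLinearMap.adjoint T‖ = ‖T‖ from LinearIsometryEquiv.norm_map _ T]; exact hTnorm
    _ = ‖x‖ := one_mul _
  have hip : (inner ℝ (ContinuousLinearMap.adjoint T x) x : ℝ) = ‖x‖ ^ 2 := by
    rw [ContinuousLinearMap.adjoint_inner_left, hx, real_inner_self_eq_norm_sq]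
  have h0 : ‖ContinuousLinearMap.adjoint T x - x‖ ^ 2 ≤ 0 := by
    rw [norm_sub_sq_real, hip]
    nlinarith [sq_nonneg ‖ContinuousLinearMap.adjoint T x‖, norm_nonneg x,
      norm_nonneg (ContinuousLinearMap.adjoint T x)]
  have := le_antisymm h0 (sq_nonneg _)
  have := pow_eq_zero_iff (n := 2) (by norm_num) |>.mp this
  rw [norm_eq_zero, sub_eq_zero] at this
  exact this

/-- For a nonexpansive bounded linear operator `T` on a real Hilbert space,
`Fix T = Fix T*`. -/
theorem fix_eq_fix_adjoint {H : Type*} [NormedAddCommGroup H] [InnerProductSpace ℝ H]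
    [CompleteSpace H] (T : H →L[ℝ] H) (hT : ∀ x : H, ‖T x‖ ≤ ‖x‖) :
    {x : H | T x = x} = {x : H | ContinuousLinearMap.adjoint T x = x} := by
  have hTnorm : ‖T‖ ≤ 1 := T.opNorm_le_bound zero_le_one (by simpa using hT)
  have hadjT : ∀ x : H, ‖ContinuousLinearMap.adjoint T x‖ ≤ ‖x‖ := by
    intro x
    calc ‖ContinuousLinearMap.adjoint T x‖ ≤ ‖ContinuousLinearMap.adjoint T‖ * ‖x‖ :=
      (ContinuousLinearMap.adjoint T).le_opNorm x
    _ ≤ 1 * ‖x‖ := by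
        apply mul_le_mul_of_nonneg_right _ (norm_nonneg x)
        rw [show ‖ContinuousLinearMap.adjoint T‖ = ‖T‖ from LinearIsometryEquiv.norm_map _ T]; exact hTnorm
    _ = ‖x‖ := one_mul _
  ext x
  simp only [Set.mem_setOf_eq]
  constructor
  · exact fun h => aux_fix_adjoint T hT h
  · intro h
    have := aux_fix_adjoint (ContinuousLinearMap.adjoint T) hadjT h
    rwa [ContinuousLinearMap.adjoint_adjoint] at this
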